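/- The group Γ presented by generators a_k for k ∈ ℤ and relations a_{k+2} = a_k⁻² a_{k+1}² and a_k a_{k+1} = a_{k+1} a_k (for all k ∈ ℤ) is left-orderable. Moreover, there is a group homomorphism from Γ to the additive group of complex numbers sending a_k to (1−i)^k, and every finitely generated subgroup of Γ embeds into a subgroup generated by two commuting generators a_{s−2}, a_{s−1}, hence is free abelian of rank at most 2. -/

import Mathlib

universe u

/-- A group is left-orderable if it admits a left-invariant strict total order. -/
def IsLeftOrderable (G : Type u) [Group G] : Prop :=
  ∃ r : G → G → Prop, IsStrictTotalOrder G r ∧ ∀ h a b : G, r a b → r (h * a) (h * b)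

/-- The relators of the group
`Γ = ⟨a_k (k ∈ ℤ) | a_{k+2} = a_k⁻² a_{k+1}², a_k a_{k+1} = a_{k+1} a_k⟩`,
the commutator subgroup of the virtual knot group `G₉`. -/
def GammaRels : Set (FreeGroup ℤ) :=
  {r | ∃ k : ℤ,
    r = FreeGroup.of (k + 2) *
          (FreeGroup.of k ^ (-2 : ℤ) * FreeGroup.of (k + 1) ^ (2 : ℤ))⁻¹ ∨
    r = FreeGroup.of k * FreeGroup.of (k + 1) *
          (FreeGroup.of (k + 1) * FreeGroup.of k)⁻¹}

namespace GammaAux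

noncomputable section

abbrev Γ := PresentedGroup GammaRels

def z : ℂ := 1 - Complex.I

lemma z_ne : z ≠ 0 := by
  simp [z, Complex.ext_iff]

lemma z_sq : z ^ 2 - 2 * z + 2 = 0 := by
  simp only [z]
  ring_nf
  rw [Complex.I_sq]
  ring

lemma rels_check : ∀ r ∈ GammaRels,
    FreeGroup.lift (fun k : ℤ => Multiplicative.ofAdd (z ^ k)) r = 1 := by
  rintro r ⟨k, h | h⟩ <;> subst h <;>
    simp only [map_mul, map_inv, map_zpow, FreeGroup.lift_apply_of, ← ofAdd_add, ← ofAdd_neg,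
      ← ofAdd_zsmul, ofAdd_eq_one, zsmul_eq_mul]
  · push_cast
    have h2 : z ^ (k + 2) = z ^ k * z * z := by
      rw [show k + 2 = k + 1 + 1 by ring, zpow_add_one₀ z_ne, zpow_add_one₀ z_ne]
    have h1 : z ^ (k + 1) = z ^ k * z := zpow_add_one₀ z_ne k
    rw [h1, h2]
    linear_combination z ^ k * z_sq
  · ring

def φ : Γ →* Multiplicative ℂ := PresentedGroup.toGroup rels_check

lemma φ_of (k : ℤ) : φ (PresentedGroup.of k) = Multiplicative.ofAdd (z ^ k) :=
  PresentedGroup.toGroup.of rels_check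

lemma relΓ {r : FreeGroup ℤ} (hr : r ∈ GammaRels) : PresentedGroup.mk GammaRels r = 1 := by
  exact (QuotientGroup.eq_one_iff r).mpr (Subgroup.subset_normalClosure hr)

lemma mk_eq {r s : FreeGroup ℤ} (h : PresentedGroup.mk GammaRels (r * s⁻¹) = 1) :
    PresentedGroup.mk GammaRels r = PresentedGroup.mk GammaRels s := by
  have := h
  rw [map_mul, map_inv, mul_inv_eq_one] at this
  exact this

lemma R1 (k : ℤ) : (PresentedGroup.of (k + 2) : Γ) =
    PresentedGroup.of k ^ (-2 : ℤ) * PresentedGroup.of (k + 1) ^ (2 : ℤ) := by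
  have h := mk_eq (relΓ ⟨k, Or.inl rfl⟩)
  simpa only [map_mul, map_zpow, PresentedGroup.of] using h

lemma R2 (k : ℤ) : (PresentedGroup.of k : Γ) * PresentedGroup.of (k + 1) =
    PresentedGroup.of (k + 1) * PresentedGroup.of k := by
  have h := mk_eq (relΓ ⟨k, Or.inr rfl⟩)
  simpa only [map_mul, PresentedGroup.of] using h

def H (s : ℤ) : Subgroup Γ :=
  Subgroup.closure {PresentedGroup.of (s - 2), PresentedGroup.of (s - 1)}

lemma commAB (s : ℤ) : Commute (PresentedGroup.of (s - 2) : Γ) (PresentedGroup.of (s - 1)) := by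
  have h := R2 (s - 2)
  rw [show s - 2 + 1 = s - 1 by ring] at h
  exact h

lemma memA {s : ℤ} : ∀ n : ℕ, (PresentedGroup.of (s - 2 + (n : ℤ)) : Γ) ∈ H s := by
  have key : ∀ n : ℕ, (PresentedGroup.of (s - 2 + (n : ℤ)) : Γ) ∈ H s ∧
      (PresentedGroup.of (s - 2 + (n : ℤ) + 1) : Γ) ∈ H s := by
    intro n
    induction n with
    | zero =>
      constructor
      · simpa [H] using Subgroup.subset_closure (Set.mem_insert _ _)
      · rw [show s - 2 + ((0 : ℕ) : ℤ) + 1 = s - 1 by push_cast; ring]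
        exact Subgroup.subset_closure (Set.mem_insert_of_mem _ rfl)
    | succ n ih =>
      constructor
      · rw [show s - 2 + (((n + 1 : ℕ)) : ℤ) = s - 2 + (n : ℤ) + 1 by push_cast; ring]
        exact ih.2
      · rw [show s - 2 + (((n + 1 : ℕ)) : ℤ) + 1 = (s - 2 + (n : ℤ)) + 2 by push_cast; ring,
          R1 (s - 2 + (n : ℤ))]
        exact mul_mem (zpow_mem ih.1 _) (zpow_mem ih.2 _)
  exact fun n => (key n).1

lemma memA' {s k : ℤ} (h : s - 2 ≤ k) : (PresentedGroup.of k : Γ) ∈ H s := by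
  have : k = s - 2 + ((k - (s - 2)).toNat : ℤ) := by
    rw [Int.toNat_of_nonneg (by omega)]; ring
  rw [this]
  exact memA _

lemma H_mono {s s' : ℤ} (h : s ≤ s') : H s' ≤ H s := by
  apply (Subgroup.closure_le _).mpr
  rintro x (rfl | rfl)
  · exact memA' (by omega)
  · exact memA' (by omega)

lemma exists_mem_H (g : Γ) : ∃ s : ℤ, g ∈ H s := by
  induction g using PresentedGroup.induction_on with
  | H w =>
    induction w using FreeGroup.induction_on with
    | C1 => exact ⟨0, one_mem _⟩
    | of k => exact ⟨k + 2, memA' (by omega)⟩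
    | inv_of k _ => exact ⟨k + 2, by rw [map_inv]; exact inv_mem (memA' (by omega))⟩
    | mul a b iha ihb =>
      obtain ⟨s, hs⟩ := iha
      obtain ⟨t, ht⟩ := ihb
      exact ⟨min s t, by
        rw [map_mul]
        exact mul_mem (H_mono (min_le_left s t) hs) (H_mono (min_le_right s t) ht)⟩

lemma comm_mul {G : Type*} [Group G] {x y : G} (hc : Commute x y) (m n m' n' : ℤ) :
    x ^ m * y ^ n * (x ^ m' * y ^ n') = x ^ (m + m') * y ^ (n + n') := by
  have hswap : y ^ n * x ^ m' = x ^ m' * y ^ n := ((hc.symm).zpow_zpow n m').eq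
  rw [zpow_add, zpow_add]
  calc x ^ m * y ^ n * (x ^ m' * y ^ n')
      = x ^ m * (y ^ n * x ^ m') * y ^ n' := by group
    _ = x ^ m * (x ^ m' * y ^ n) * y ^ n' := by rw [hswap]
    _ = x ^ m * x ^ m' * (y ^ n * y ^ n') := by group

lemma rep {G : Type*} [Group G] {x y : G} (hc : Commute x y) {g : G}
    (hg : g ∈ Subgroup.closure {x, y}) : ∃ m n : ℤ, g = x ^ m * y ^ n := by
  induction hg using Subgroup.closure_induction with
  | mem a ha =>
    rcases ha with rfl | rfl
    · exact ⟨1, 0, by simp⟩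
    · exact ⟨0, 1, by simp⟩
  | one => exact ⟨0, 0, by simp⟩
  | mul a b _ _ iha ihb =>
    obtain ⟨m, n, rfl⟩ := iha
    obtain ⟨m', n', rfl⟩ := ihb
    exact ⟨m + m', n + n', comm_mul hc m n m' n'⟩
  | inv a _ iha =>
    obtain ⟨m, n, rfl⟩ := iha
    refine ⟨-m, -n, ?_⟩
    have hswap : y ^ (-n) * x ^ (-m) = x ^ (-m) * y ^ (-n) := ((hc.symm).zpow_zpow _ _).eq
    rw [mul_inv_rev, ← zpow_neg, ← zpow_neg, hswap]

lemma indep {s : ℤ} {m n : ℤ} (h : (m : ℂ) * z ^ (s - 2) + (n : ℂ) * z ^ (s - 1) = 0) :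
    m = 0 ∧ n = 0 := by
  have hz : z ^ (s - 1) = z ^ (s - 2) * z := by
    rw [show s - 1 = (s - 2) + 1 by ring, zpow_add_one₀ z_ne]
  have h0 : z ^ (s - 2) * ((m : ℂ) + n * z) = 0 := by
    rw [hz] at h; linear_combination h
  have h1 : (m : ℂ) + n * z = 0 := by
    rcases mul_eq_zero.mp h0 with h' | h'
    · exact absurd h' (zpow_ne_zero _ z_ne)
    · exact h'
  have hre := congrArg Complex.re h1
  have him := congrArg Complex.im h1
  simp [z, Complex.add_re, Complex.add_im, Complex.mul_re, Complex.mul_im] at hre him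
  have hn : n = 0 := him
  subst hn
  norm_num at hre
  exact ⟨by exact_mod_cast hre, rfl⟩

lemma phi_powers (s m n : ℤ) :
    φ (PresentedGroup.of (s - 2) ^ m * PresentedGroup.of (s - 1) ^ n : Γ)
      = Multiplicative.ofAdd ((m : ℂ) * z ^ (s - 2) + (n : ℂ) * z ^ (s - 1)) := by
  rw [map_mul, map_zpow, map_zpow, φ_of, φ_of, ← ofAdd_zsmul, ← ofAdd_zsmul, ← ofAdd_add,
    zsmul_eq_mul, zsmul_eq_mul]

lemma uniq {s m n m' n' : ℤ}
    (h : (PresentedGroup.of (s - 2) : Γ) ^ m * PresentedGroup.of (s - 1) ^ n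
       = PresentedGroup.of (s - 2) ^ m' * PresentedGroup.of (s - 1) ^ n') :
    m = m' ∧ n = n' := by
  have h2 := congrArg φ h
  rw [phi_powers, phi_powers] at h2
  have h3 := Multiplicative.ofAdd.injective h2
  have h4 : ((m - m' : ℤ) : ℂ) * z ^ (s - 2) + ((n - n' : ℤ) : ℂ) * z ^ (s - 1) = 0 := by
    push_cast
    linear_combination h3
  obtain ⟨e1, e2⟩ := indep h4
  omega

lemma φ_ker {g : Γ} (hg : φ g = 1) : g = 1 := by
  obtain ⟨s, hs⟩ := exists_mem_H g
  obtain ⟨m, n, rfl⟩ := rep (commAB s) hs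
  rw [phi_powers, ofAdd_eq_one] at hg
  obtain ⟨hm, hn⟩ := indep hg
  subst hm; subst hn; simp

lemma φ_inj : Function.Injective φ := by
  intro a b h
  have h1 : φ (b⁻¹ * a) = 1 := by rw [map_mul, map_inv, h, inv_mul_cancel]
  have h2 : b⁻¹ * a = 1 := φ_ker h1
  calc a = b * (b⁻¹ * a) := by group
    _ = b * 1 := by rw [h2]
    _ = b := mul_one b


def ltΓ (x y : Γ) : Prop :=
  (Multiplicative.toAdd (φ x)).re < (Multiplicative.toAdd (φ y)).re ∨
  ((Multiplicative.toAdd (φ x)).re = (Multiplicative.toAdd (φ y)).re ∧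
   (Multiplicative.toAdd (φ x)).im < (Multiplicative.toAdd (φ y)).im)

lemma ltΓ_trichotomous : ∀ x y : Γ, ltΓ x y ∨ x = y ∨ ltΓ y x := by
  intro x y
  rcases lt_trichotomy (Multiplicative.toAdd (φ x)).re (Multiplicative.toAdd (φ y)).re with
    h | h | h
  · exact Or.inl (Or.inl h)
  · rcases lt_trichotomy (Multiplicative.toAdd (φ x)).im (Multiplicative.toAdd (φ y)).im with
      h' | h' | h'
    · exact Or.inl (Or.inr ⟨h, h'⟩)
    · refine Or.inr (Or.inl (φ_inj ?_))
      have : Multiplicative.toAdd (φ x) = Multiplicative.toAdd (φ y) := Complex.ext h h'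
      exact Multiplicative.toAdd.injective this
    · exact Or.inr (Or.inr (Or.inr ⟨h.symm, h'⟩))
  · exact Or.inr (Or.inr (Or.inl h))

lemma ltΓ_irrefl : ∀ x : Γ, ¬ ltΓ x x := by
  rintro x (h | ⟨_, h⟩) <;> exact lt_irrefl _ h

lemma ltΓ_trans : ∀ x y w : Γ, ltΓ x y → ltΓ y w → ltΓ x w := by
  rintro x y w (h | ⟨e, h⟩) (h' | ⟨e', h'⟩)
  · exact Or.inl (lt_trans h h')
  · exact Or.inl (by rw [← e']; exact h)
  · exact Or.inl (by rw [e]; exact h')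
  · exact Or.inr ⟨e.trans e', lt_trans h h'⟩

lemma ltΓ_left_invariant : ∀ h x y : Γ, ltΓ x y → ltΓ (h * x) (h * y) := by
  intro h x y hxy
  have hx : Multiplicative.toAdd (φ (h * x)) =
      Multiplicative.toAdd (φ h) + Multiplicative.toAdd (φ x) := by
    rw [map_mul]; rfl
  have hy : Multiplicative.toAdd (φ (h * y)) =
      Multiplicative.toAdd (φ h) + Multiplicative.toAdd (φ y) := by
    rw [map_mul]; rfl
  rcases hxy with h1 | ⟨e1, h1⟩
  · exact Or.inl (by rw [hx, hy, Complex.add_re, Complex.add_re]; linarith)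
  · refine Or.inr ⟨?_, ?_⟩
    · rw [hx, hy, Complex.add_re, Complex.add_re, e1]
    · rw [hx, hy, Complex.add_im, Complex.add_im]; linarith

lemma finset_mem_H (T : Finset Γ) : ∃ s : ℤ, (T : Set Γ) ⊆ (H s : Set Γ) := by
  classical
  induction T using Finset.induction_on with
  | empty => exact ⟨0, by simp⟩
  | @insert g T hg ih =>
    obtain ⟨s, hs⟩ := ih
    obtain ⟨t, ht⟩ := exists_mem_H g
    refine ⟨min s t, ?_⟩
    intro x hx
    rcases Finset.mem_insert.mp (by exact_mod_cast hx) with rfl | hx'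
    · exact H_mono (min_le_right s t) ht
    · exact H_mono (min_le_left s t) (hs hx')

end
end GammaAux

/-- The group
`Γ = ⟨a_k (k ∈ ℤ) | a_{k+2} = a_k⁻² a_{k+1}², a_k a_{k+1} = a_{k+1} a_k⟩` is left-orderable;
there is a homomorphism `Γ → (ℂ, +)` sending `a_k` to `(1 - i)^k`; and every finitely
generated subgroup of `Γ` is contained in the subgroup generated by two commuting
generators `a_{s-2}, a_{s-1}`, hence embeds into `ℤ × ℤ` (is free abelian of rank ≤ 2). -/
theorem Gamma_leftOrderable :
    IsLeftOrderable (PresentedGroup GammaRels) ∧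
    (∃ φ : PresentedGroup GammaRels →* Multiplicative ℂ,
      ∀ k : ℤ, φ (PresentedGroup.of k) = Multiplicative.ofAdd ((1 - Complex.I) ^ k)) ∧
    (∀ S : Subgroup (PresentedGroup GammaRels), S.FG →
      ∃ s : ℤ,
        S ≤ Subgroup.closure
            {PresentedGroup.of (s - 2), PresentedGroup.of (s - 1)} ∧
        ∃ f : S →* Multiplicative (ℤ × ℤ), Function.Injective f) := by
  classical
  refine ⟨⟨GammaAux.ltΓ,
      { trichotomous := fun a b h1 h2 => by
          rcases GammaAux.ltΓ_trichotomous a b with h | h | h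
          exacts [absurd h h1, h, absurd h h2]
        , irrefl := GammaAux.ltΓ_irrefl,
        trans := GammaAux.ltΓ_trans },
      GammaAux.ltΓ_left_invariant⟩,
    ⟨GammaAux.φ, fun k => GammaAux.φ_of k⟩, ?_⟩
  · open GammaAux in
    intro S hS
    obtain ⟨T, hT⟩ := hS
    obtain ⟨s, hsub⟩ := finset_mem_H T
    have hSH : S ≤ H s := by
      rw [← hT]
      exact (Subgroup.closure_le _).mpr hsub
    set a := (PresentedGroup.of (s - 2) : PresentedGroup GammaRels) with ha
    set b := (PresentedGroup.of (s - 1) : PresentedGroup GammaRels) with hb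
    have hrep : ∀ x : S, ∃ mn : ℤ × ℤ, (x : PresentedGroup GammaRels) = a ^ mn.1 * b ^ mn.2 :=
      fun x => by
        obtain ⟨m, n, h⟩ := rep (commAB s) (hSH x.2)
        exact ⟨(m, n), h⟩
    choose c hc using hrep
    have huniq : ∀ m n m' n' : ℤ, a ^ m * b ^ n = a ^ m' * b ^ n' → m = m' ∧ n = n' :=
      fun m n m' n' h => uniq h
    have hcadd : ∀ x y : S, c (x * y) = c x + c y := by
      intro x y
      have hxy := hc (x * y)
      have h2 : (↑(x * y) : PresentedGroup GammaRels)
          = a ^ ((c x).1 + (c y).1) * b ^ ((c x).2 + (c y).2) := by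
        rw [Subgroup.coe_mul, hc x, hc y, comm_mul (commAB s)]
      obtain ⟨e1, e2⟩ := huniq _ _ _ _ (hxy.symm.trans h2)
      exact Prod.ext e1 e2
    refine ⟨s, hSH, MonoidHom.mk' (fun x => Multiplicative.ofAdd (c x)) ?_, ?_⟩
    · intro x y
      simp only [hcadd, ofAdd_add]
    · intro x y hxy
      have hcc : c x = c y := Multiplicative.ofAdd.injective hxy
      have : (x : PresentedGroup GammaRels) = (y : PresentedGroup GammaRels) := by
        rw [hc x, hc y, hcc]
      exact Subtype.ext this
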